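/- Let N ≥ 2, 𝒩 = {1,...,N}, and suppose h is the pointwise limit, on the strictly positive vectors of ℝ^𝒩, of the functions x ↦ d_H(x, y^n) − d_H(𝟙, y^n) for some sequence (y^n) of strictly positive vectors with d_H(𝟙, y^n) → ∞, where 𝟙 = (1,...,1). Then there exist u, v ∈ ℝ^𝒩 with nonnegative entries, max_{i∈𝒩} u_i = 1, max_{i∈𝒩} v_i = 1, and u_i v_i = 0 for all i ∈ 𝒩, such that h(x) = log( max_{i∈𝒩} u_i x_i ) + log( max_{i∈𝒩} v_i / x_i ) for all strictly positive x ∈ ℝ^𝒩. Conversely, every function of this form arises as such a limit and is not of the form x ↦ d_H(x, z) − d_H(𝟙, z) for any strictly positive z. -/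

import Mathlib

open Filter Topology

/-- Hilbert's projective metric on the strictly positive vectors of `ℝ^𝒩`. -/
noncomputable def hilbertDist {N : ℕ} (x y : Fin N → ℝ) : ℝ :=
  Real.log (⨆ i, x i / y i) - Real.log (⨅ i, x i / y i)

section Helpers

variable {N : ℕ} [Nonempty (Fin N)]

lemma myciSup_eq_of {f : Fin N → ℝ} {i0 : Fin N} (h : ∀ i, f i ≤ f i0) :
    (⨆ i, f i) = f i0 :=
  le_antisymm (ciSup_le h) (le_ciSup (Set.Finite.bddAbove (Set.finite_range f)) i0)

lemma myciInf_eq_of {f : Fin N → ℝ} {i0 : Fin N} (h : ∀ i, f i0 ≤ f i) :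
    (⨅ i, f i) = f i0 :=
  le_antisymm (ciInf_le (Set.Finite.bddBelow (Set.finite_range f)) i0) (le_ciInf h)

lemma myexists_sup (f : Fin N → ℝ) : ∃ i, (⨆ j, f j) = f i ∧ ∀ j, f j ≤ f i := by
  obtain ⟨i, hi⟩ := Finite.exists_max f
  exact ⟨i, myciSup_eq_of hi, hi⟩

lemma myexists_inf (f : Fin N → ℝ) : ∃ i, (⨅ j, f j) = f i ∧ ∀ j, f i ≤ f j := by
  obtain ⟨i, hi⟩ := Finite.exists_min f
  exact ⟨i, myciInf_eq_of hi, hi⟩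

lemma myle_sup (f : Fin N → ℝ) (i : Fin N) : f i ≤ ⨆ j, f j :=
  le_ciSup (Set.Finite.bddAbove (Set.finite_range f)) i

lemma myinf_le (f : Fin N → ℝ) (i : Fin N) : (⨅ j, f j) ≤ f i :=
  ciInf_le (Set.Finite.bddBelow (Set.finite_range f)) i

lemma mytendsto_ciSup {α : Type*} {l : Filter α} {f : α → Fin N → ℝ} {g : Fin N → ℝ}
    (h : ∀ i, Tendsto (fun a => f a i) l (𝓝 (g i))) :
    Tendsto (fun a => ⨆ i, f a i) l (𝓝 (⨆ i, g i)) := by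
  simp only [← Finset.sup'_univ_eq_ciSup]
  exact Filter.Tendsto.finset_sup'_nhds_apply Finset.univ_nonempty (fun i _ => h i)

lemma mysup_mul_pos {u x : Fin N → ℝ} (hu1 : (⨆ i, u i) = 1) (hx : ∀ i, 0 < x i) :
    0 < ⨆ i, u i * x i := by
  obtain ⟨i0, hs, _⟩ := myexists_sup u
  have h1 : u i0 = 1 := hs.symm.trans hu1
  have : (0:ℝ) < u i0 * x i0 := by rw [h1]; simpa using hx i0
  exact this.trans_le (myle_sup (fun i => u i * x i) i0)

lemma mysup_div_pos {v x : Fin N → ℝ} (hv1 : (⨆ i, v i) = 1) (hx : ∀ i, 0 < x i) :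
    0 < ⨆ i, v i / x i := by
  obtain ⟨i0, hs, _⟩ := myexists_sup v
  have h1 : v i0 = 1 := hs.symm.trans hv1
  have : (0:ℝ) < v i0 / x i0 := by rw [h1]; simpa using hx i0
  exact this.trans_le (myle_sup (fun i => v i / x i) i0)

/-- The key formula for the Hilbert distance. -/
lemma hilbert_formula {x y : Fin N → ℝ} (hx : ∀ i, 0 < x i) (hy : ∀ i, 0 < y i) :
    hilbertDist x y =
      Real.log (⨆ i, ((⨅ j, y j) / y i) * x i) + Real.log (⨆ i, (y i / ⨆ j, y j) / x i)
        + Real.log (⨆ j, y j) - Real.log (⨅ j, y j) := by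
  obtain ⟨i0, hS, hi0⟩ := myexists_sup (fun i => x i / y i)
  obtain ⟨i1, hI, hi1⟩ := myexists_inf (fun i => x i / y i)
  obtain ⟨jm, hm, hjm⟩ := myexists_inf y
  obtain ⟨jM, hM, hjM⟩ := myexists_sup y
  have hmpos : 0 < ⨅ j, y j := hm ▸ hy jm
  have hMpos : 0 < ⨆ j, y j := hM ▸ hy jM
  have hA : (⨆ i, ((⨅ j, y j) / y i) * x i) = (⨅ j, y j) * (x i0 / y i0) := by
    rw [myciSup_eq_of (f := fun i => ((⨅ j, y j) / y i) * x i) (i0 := i0) ?_]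
    · field_simp
    · intro i
      show ((⨅ j, y j) / y i) * x i ≤ ((⨅ j, y j) / y i0) * x i0
      have h1 : ((⨅ j, y j) / y i) * x i = (⨅ j, y j) * (x i / y i) := by
        field_simp
      have h2 : ((⨅ j, y j) / y i0) * x i0 = (⨅ j, y j) * (x i0 / y i0) := by
        field_simp
      rw [h1, h2]
      exact mul_le_mul_of_nonneg_left (hi0 i) hmpos.le
  have hB : (⨆ i, (y i / ⨆ j, y j) / x i) = (y i1 / x i1) / (⨆ j, y j) := by
    rw [myciSup_eq_of (f := fun i => (y i / ⨆ j, y j) / x i) (i0 := i1) ?_]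
    · ring
    · intro i
      show (y i / ⨆ j, y j) / x i ≤ (y i1 / ⨆ j, y j) / x i1
      have h3 : y i / x i ≤ y i1 / x i1 := by
        rw [div_le_div_iff₀ (hx i) (hx i1)]
        have h := hi1 i
        rw [div_le_div_iff₀ (hy i1) (hy i)] at h
        linarith
      have h4 : (y i / ⨆ j, y j) / x i = (y i / x i) / (⨆ j, y j) := by ring
      have h5 : (y i1 / ⨆ j, y j) / x i1 = (y i1 / x i1) / (⨆ j, y j) := by ring
      rw [h4, h5]
      gcongr
  rw [hilbertDist, hS, hI, hA, hB,
    Real.log_mul hmpos.ne' (div_pos (hx i0) (hy i0)).ne',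
    Real.log_div (div_pos (hy i1) (hx i1)).ne' hMpos.ne',
    Real.log_div (hy i1).ne' (hx i1).ne', Real.log_div (hx i0).ne' (hy i0).ne',
    Real.log_div (hx i1).ne' (hy i1).ne']
  ring

lemma hilbert_one {y : Fin N → ℝ} (hy : ∀ i, 0 < y i) :
    hilbertDist (1 : Fin N → ℝ) y = Real.log (⨆ j, y j) - Real.log (⨅ j, y j) := by
  obtain ⟨jm, hm, hjm⟩ := myexists_inf y
  obtain ⟨jM, hM, hjM⟩ := myexists_sup y
  have hone : ∀ i : Fin N, (1 : Fin N → ℝ) i = 1 := fun i => rfl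
  rw [hilbert_formula (fun i => by rw [hone]; norm_num) hy]
  have hA : (⨆ i, ((⨅ j, y j) / y i) * (1 : Fin N → ℝ) i) = 1 := by
    rw [myciSup_eq_of (f := fun i => ((⨅ j, y j) / y i) * (1 : Fin N → ℝ) i) (i0 := jm) ?_]
    · rw [hone, hm, mul_one, div_self (hy jm).ne']
    · intro i
      simp only [hone, mul_one]
      gcongr
      · exact hm ▸ (hy jm).le
      · exact hy jm
      · exact hm ▸ hjm i
  have hB : (⨆ i, (y i / ⨆ j, y j) / (1 : Fin N → ℝ) i) = 1 := by
    rw [myciSup_eq_of (f := fun i => (y i / ⨆ j, y j) / (1 : Fin N → ℝ) i) (i0 := jM) ?_]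
    · rw [hone, hM, div_one, div_self (hy jM).ne']
    · intro i
      simp only [hone, div_one]
      gcongr
      · rw [hM]; exact (hy jM).le
      · exact hM ▸ hjM i
  rw [hA, hB, Real.log_one]
  ring

lemma hilbert_diff {x y : Fin N → ℝ} (hx : ∀ i, 0 < x i) (hy : ∀ i, 0 < y i) :
    hilbertDist x y - hilbertDist (1 : Fin N → ℝ) y =
      Real.log (⨆ i, ((⨅ j, y j) / y i) * x i) + Real.log (⨆ i, (y i / ⨆ j, y j) / x i) := by
  rw [hilbert_formula hx hy, hilbert_one hy]
  ring

lemma hilbert_nonneg {x y : Fin N → ℝ} (hx : ∀ i, 0 < x i) (hy : ∀ i, 0 < y i) :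
    0 ≤ hilbertDist x y := by
  obtain ⟨i1, hI, _⟩ := myexists_inf (fun i => x i / y i)
  have hIpos : 0 < ⨅ i, x i / y i := hI ▸ div_pos (hx i1) (hy i1)
  have hle : (⨅ i, x i / y i) ≤ ⨆ i, x i / y i :=
    (myinf_le (fun i => x i / y i) i1).trans (myle_sup (fun i => x i / y i) i1)
  exact sub_nonneg.mpr (Real.log_le_log hIpos hle)

end Helpers

theorem hilbert_horofunctions (N : ℕ) (hN : 2 ≤ N) :
    (∀ h : (Fin N → ℝ) → ℝ,
      (∃ y : ℕ → Fin N → ℝ, (∀ n i, 0 < y n i) ∧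
        Tendsto (fun n => hilbertDist (1 : Fin N → ℝ) (y n)) atTop atTop ∧
        ∀ x : Fin N → ℝ, (∀ i, 0 < x i) →
          Tendsto (fun n => hilbertDist x (y n) - hilbertDist (1 : Fin N → ℝ) (y n))
            atTop (𝓝 (h x))) →
      ∃ u v : Fin N → ℝ, (∀ i, 0 ≤ u i) ∧ (∀ i, 0 ≤ v i) ∧
        (⨆ i, u i) = 1 ∧ (⨆ i, v i) = 1 ∧ (∀ i, u i * v i = 0) ∧
        ∀ x : Fin N → ℝ, (∀ i, 0 < x i) →
          h x = Real.log (⨆ i, u i * x i) + Real.log (⨆ i, v i / x i)) ∧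
    (∀ u v : Fin N → ℝ, (∀ i, 0 ≤ u i) → (∀ i, 0 ≤ v i) →
      (⨆ i, u i) = 1 → (⨆ i, v i) = 1 → (∀ i, u i * v i = 0) →
      (∃ y : ℕ → Fin N → ℝ, (∀ n i, 0 < y n i) ∧
        Tendsto (fun n => hilbertDist (1 : Fin N → ℝ) (y n)) atTop atTop ∧
        ∀ x : Fin N → ℝ, (∀ i, 0 < x i) →
          Tendsto (fun n => hilbertDist x (y n) - hilbertDist (1 : Fin N → ℝ) (y n))
            atTop (𝓝 (Real.log (⨆ i, u i * x i) + Real.log (⨆ i, v i / x i)))) ∧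
      ¬∃ z : Fin N → ℝ, (∀ i, 0 < z i) ∧
        ∀ x : Fin N → ℝ, (∀ i, 0 < x i) →
          Real.log (⨆ i, u i * x i) + Real.log (⨆ i, v i / x i)
            = hilbertDist x z - hilbertDist (1 : Fin N → ℝ) z) := by
  haveI : Nonempty (Fin N) := ⟨⟨0, by omega⟩⟩
  constructor
  · -- forward direction
    rintro h ⟨y, hy, hd, hlim⟩
    set a : ℕ → Fin N → ℝ := fun n i => (⨅ j, y n j) / y n i with ha
    set b : ℕ → Fin N → ℝ := fun n i => y n i / (⨆ j, y n j) with hb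
    have hmpos : ∀ n, 0 < ⨅ j, y n j := by
      intro n; obtain ⟨jm, hm, _⟩ := myexists_inf (y n); exact hm ▸ hy n jm
    have hMpos : ∀ n, 0 < ⨆ j, y n j := by
      intro n; obtain ⟨jM, hM, _⟩ := myexists_sup (y n); exact hM ▸ hy n jM
    have hmem : ∀ n, (a n, b n) ∈ (Set.Icc (0:Fin N → ℝ) 1) ×ˢ (Set.Icc (0:Fin N → ℝ) 1) := by
      intro n
      refine ⟨Set.mem_Icc.mpr ⟨?_, ?_⟩, Set.mem_Icc.mpr ⟨?_, ?_⟩⟩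
      · intro i; exact div_nonneg (hmpos n).le (hy n i).le
      · intro i; exact div_le_one_of_le₀ (myinf_le _ i) (hy n i).le
      · intro i; exact div_nonneg (hy n i).le (hMpos n).le
      · intro i; exact div_le_one_of_le₀ (myle_sup _ i) (hMpos n).le
    have hcpt : IsCompact ((Set.Icc (0:Fin N → ℝ) 1) ×ˢ (Set.Icc (0:Fin N → ℝ) 1)) :=
      isCompact_Icc.prod isCompact_Icc
    obtain ⟨q, hqs, φ, hφ, hconv⟩ := hcpt.tendsto_subseq hmem
    have hau : ∀ i, Tendsto (fun k => a (φ k) i) atTop (𝓝 (q.1 i)) := fun i =>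
      (((continuous_apply i).comp continuous_fst).tendsto q).comp hconv
    have hbv : ∀ i, Tendsto (fun k => b (φ k) i) atTop (𝓝 (q.2 i)) := fun i =>
      (((continuous_apply i).comp continuous_snd).tendsto q).comp hconv
    have hsupa : ∀ n, (⨆ i, a n i) = 1 := by
      intro n
      obtain ⟨jm, hm, hjm⟩ := myexists_inf (y n)
      rw [myciSup_eq_of (f := fun i => a n i) (i0 := jm) ?_]
      · show (⨅ j, y n j) / y n jm = 1
        rw [hm, div_self (hy n jm).ne']
      · intro i
        show (⨅ j, y n j) / y n i ≤ (⨅ j, y n j) / y n jm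
        gcongr
        · exact (hmpos n).le
        · exact hy n jm
        · exact hm ▸ hjm i
    have hsupb : ∀ n, (⨆ i, b n i) = 1 := by
      intro n
      obtain ⟨jM, hM, hjM⟩ := myexists_sup (y n)
      rw [myciSup_eq_of (f := fun i => b n i) (i0 := jM) ?_]
      · show y n jM / (⨆ j, y n j) = 1
        rw [hM, div_self (hy n jM).ne']
      · intro i
        show y n i / (⨆ j, y n j) ≤ y n jM / (⨆ j, y n j)
        gcongr
        · rw [hM]; exact (hy n jM).le
        · exact hM ▸ hjM i
    have hu1 : (⨆ i, q.1 i) = 1 :=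
      tendsto_nhds_unique (mytendsto_ciSup hau)
        (Tendsto.congr (fun k => (hsupa (φ k)).symm) tendsto_const_nhds)
    have hv1 : (⨆ i, q.2 i) = 1 :=
      tendsto_nhds_unique (mytendsto_ciSup hbv)
        (Tendsto.congr (fun k => (hsupb (φ k)).symm) tendsto_const_nhds)
    have hab : ∀ n i, a n i * b n i = Real.exp (-(hilbertDist (1 : Fin N → ℝ) (y n))) := by
      intro n i
      rw [hilbert_one (hy n),
        show -((Real.log (⨆ j, y n j)) - Real.log (⨅ j, y n j))
          = Real.log ((⨅ j, y n j) / (⨆ j, y n j)) by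
          rw [Real.log_div (hmpos n).ne' (hMpos n).ne']; ring,
        Real.exp_log (div_pos (hmpos n) (hMpos n))]
      show (⨅ j, y n j) / y n i * (y n i / ⨆ j, y n j) = _
      rw [div_mul_div_comm, mul_comm (⨅ j, y n j) (y n i),
        mul_div_mul_left _ _ (hy n i).ne']
    have hexp : Tendsto (fun n => Real.exp (-(hilbertDist (1:Fin N → ℝ) (y n)))) atTop (𝓝 0) :=
      Real.tendsto_exp_atBot.comp (tendsto_neg_atTop_atBot.comp hd)
    refine ⟨q.1, q.2, fun i => (Set.mem_Icc.mp hqs.1).1 i, fun i => (Set.mem_Icc.mp hqs.2).1 i,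
      hu1, hv1, ?_, ?_⟩
    · intro i
      refine tendsto_nhds_unique ((hau i).mul (hbv i)) ?_
      exact Tendsto.congr (fun k => (hab (φ k) i).symm) (hexp.comp hφ.tendsto_atTop)
    · intro x hx
      have p1 : 0 < ⨆ i, q.1 i * x i := mysup_mul_pos hu1 hx
      have p2 : 0 < ⨆ i, q.2 i / x i := mysup_div_pos hv1 hx
      have t1 : Tendsto (fun k => Real.log (⨆ i, a (φ k) i * x i)) atTop
          (𝓝 (Real.log (⨆ i, q.1 i * x i))) :=
        ((Real.continuousAt_log p1.ne').tendsto).comp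
          (mytendsto_ciSup (fun i => (hau i).mul_const (x i)))
      have t2 : Tendsto (fun k => Real.log (⨆ i, b (φ k) i / x i)) atTop
          (𝓝 (Real.log (⨆ i, q.2 i / x i))) :=
        ((Real.continuousAt_log p2.ne').tendsto).comp
          (mytendsto_ciSup (fun i => (hbv i).div_const (x i)))
      have t4 : Tendsto (fun k => hilbertDist x (y (φ k)) - hilbertDist (1:Fin N → ℝ) (y (φ k)))
          atTop (𝓝 (h x)) := (hlim x hx).comp hφ.tendsto_atTop
      exact tendsto_nhds_unique t4
        (Tendsto.congr (fun k => (hilbert_diff hx (hy (φ k))).symm) (t1.add t2))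
  · -- converse direction
    rintro u v hu hv hu1 hv1 huv
    obtain ⟨iu, hsu, _⟩ := myexists_sup u
    have hiu : u iu = 1 := hsu.symm.trans hu1
    obtain ⟨iv, hsv, _⟩ := myexists_sup v
    have hiv : v iv = 1 := hsv.symm.trans hv1
    have hule : ∀ i, u i ≤ 1 := fun i => hu1 ▸ myle_sup u i
    have hvle : ∀ i, v i ≤ 1 := fun i => hv1 ▸ myle_sup v i
    have hviu : v iu = 0 := by have h := huv iu; rw [hiu, one_mul] at h; exact h
    have huiv : u iv = 0 := by have h := huv iv; rw [hiv, mul_one] at h; exact h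
    set ε : ℕ → ℝ := fun n => Real.exp (-(n:ℝ)) with hε
    have hεpos : ∀ n, 0 < ε n := fun n => Real.exp_pos _
    have hεle1 : ∀ n, ε n ≤ 1 := fun n => by
      rw [hε]; calc Real.exp (-(n:ℝ)) ≤ Real.exp 0 := Real.exp_le_exp.mpr (neg_nonpos.mpr (Nat.cast_nonneg n))
        _ = 1 := Real.exp_zero
    have hεto : Tendsto ε atTop (𝓝 0) :=
      Real.tendsto_exp_atBot.comp (tendsto_neg_atTop_atBot.comp tendsto_natCast_atTop_atTop)
    set y : ℕ → Fin N → ℝ := fun n i => max (v i) (ε n) / max (u i) (ε n) with hydef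
    have hy : ∀ n i, 0 < y n i := fun n i =>
      div_pos (lt_of_lt_of_le (hεpos n) (le_max_right _ _))
        (lt_of_lt_of_le (hεpos n) (le_max_right _ _))
    have hyiu : ∀ n, y n iu = ε n := by
      intro n
      show max (v iu) (ε n) / max (u iu) (ε n) = ε n
      rw [hviu, hiu, max_eq_right (hεpos n).le, max_eq_left (hεle1 n), div_one]
    have hyiv : ∀ n, y n iv = (ε n)⁻¹ := by
      intro n
      show max (v iv) (ε n) / max (u iv) (ε n) = (ε n)⁻¹
      rw [huiv, hiv, max_eq_left (hεle1 n), max_eq_right (hεpos n).le, one_div]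
    have hinf : ∀ n, (⨅ j, y n j) = ε n := by
      intro n
      have hle : ∀ i, y n iu ≤ y n i := by
        intro i
        rw [hyiu]
        show ε n ≤ max (v i) (ε n) / max (u i) (ε n)
        rw [le_div_iff₀ (lt_of_lt_of_le (hεpos n) (le_max_right _ _))]
        calc ε n * max (u i) (ε n) ≤ ε n * 1 :=
              mul_le_mul_of_nonneg_left (max_le (hule i) (hεle1 n)) (hεpos n).le
          _ = ε n := mul_one _
          _ ≤ max (v i) (ε n) := le_max_right _ _
      exact (myciInf_eq_of hle).trans (hyiu n)
    have hsup : ∀ n, (⨆ j, y n j) = (ε n)⁻¹ := by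
      intro n
      have hle : ∀ i, y n i ≤ y n iv := by
        intro i
        rw [hyiv]
        show max (v i) (ε n) / max (u i) (ε n) ≤ (ε n)⁻¹
        rw [← one_div]
        calc max (v i) (ε n) / max (u i) (ε n) ≤ max (v i) (ε n) / ε n :=
              (div_le_div_iff_of_pos_left (lt_of_lt_of_le (hεpos n) (le_max_right _ _))
                (lt_of_lt_of_le (hεpos n) (le_max_right _ _)) (hεpos n)).mpr
                (le_max_right _ _)
          _ ≤ 1 / ε n := (div_le_div_iff_of_pos_right (hεpos n)).mpr (max_le (hvle i) (hεle1 n))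
      exact (myciSup_eq_of hle).trans (hyiv n)
    have hd1 : ∀ n, hilbertDist (1 : Fin N → ℝ) (y n) = 2 * (n : ℝ) := by
      intro n
      rw [hilbert_one (hy n), hsup n, hinf n, Real.log_inv,
        show ε n = Real.exp (-(n:ℝ)) from rfl, Real.log_exp]
      ring
    refine ⟨⟨y, hy, ?_, ?_⟩, ?_⟩
    · refine Tendsto.congr (fun n => (hd1 n).symm) ?_
      exact (tendsto_natCast_atTop_atTop (R := ℝ)).const_mul_atTop two_pos
    · intro x hx
      have p1 : 0 < ⨆ i, u i * x i := mysup_mul_pos hu1 hx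
      have p2 : 0 < ⨆ i, v i / x i := mysup_div_pos hv1 hx
      have ha_lim : ∀ i, Tendsto (fun n => (⨅ j, y n j) / y n i) atTop (𝓝 (u i)) := by
        intro i
        by_cases hui : 0 < u i
        · have hvi : v i = 0 := by
            rcases mul_eq_zero.mp (huv i) with h' | h'
            · exact absurd h' hui.ne'
            · exact h'
          have hev : ∀ᶠ n in atTop, (⨅ j, y n j) / y n i = u i := by
            filter_upwards [hεto.eventually_lt_const hui] with n hn
            have hyi : y n i = ε n / u i := by
              show max (v i) (ε n) / max (u i) (ε n) = ε n / u i
              rw [hvi, max_eq_right (hεpos n).le, max_eq_left hn.le]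
            rw [hinf n, hyi]
            field_simp
            exact div_self (hεpos n).ne'
          exact Tendsto.congr' (EventuallyEq.symm hev) tendsto_const_nhds
        · have hui0 : u i = 0 := le_antisymm (not_lt.mp hui) (hu i)
          rw [hui0]
          refine squeeze_zero
            (fun n => div_nonneg (le_of_lt (by rw [hinf n]; exact hεpos n)) (hy n i).le) ?_ hεto
          intro n
          rw [hinf n]
          have h1 : (1:ℝ) ≤ y n i := by
            show 1 ≤ max (v i) (ε n) / max (u i) (ε n)
            rw [hui0, max_eq_right (hεpos n).le, le_div_iff₀ (hεpos n), one_mul]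
            exact le_max_right _ _
          exact div_le_self (hεpos n).le h1
      have hb_lim : ∀ i, Tendsto (fun n => y n i / (⨆ j, y n j)) atTop (𝓝 (v i)) := by
        intro i
        by_cases hvi : 0 < v i
        · have hui0 : u i = 0 := by
            rcases mul_eq_zero.mp (huv i) with h' | h'
            · exact h'
            · exact absurd h' hvi.ne'
          have hev : ∀ᶠ n in atTop, y n i / (⨆ j, y n j) = v i := by
            filter_upwards [hεto.eventually_lt_const hvi] with n hn
            have hyi : y n i = v i / ε n := by
              show max (v i) (ε n) / max (u i) (ε n) = v i / ε n
              rw [hui0, max_eq_left hn.le, max_eq_right (hεpos n).le]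
            rw [hsup n, hyi, div_eq_mul_inv, inv_inv, div_mul_cancel₀ _ (hεpos n).ne']
          exact Tendsto.congr' (EventuallyEq.symm hev) tendsto_const_nhds
        · have hvi0 : v i = 0 := le_antisymm (not_lt.mp hvi) (hv i)
          rw [hvi0]
          refine squeeze_zero
            (fun n => div_nonneg (hy n i).le (le_of_lt (by rw [hsup n]; positivity))) ?_ hεto
          intro n
          rw [hsup n, div_eq_mul_inv, inv_inv]
          have h1 : y n i ≤ 1 := by
            show max (v i) (ε n) / max (u i) (ε n) ≤ 1
            rw [hvi0, max_eq_right (hεpos n).le,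
              div_le_one (lt_of_lt_of_le (hεpos n) (le_max_right _ _))]
            exact le_max_right _ _
          calc y n i * ε n ≤ 1 * ε n :=
                mul_le_mul_of_nonneg_right h1 (hεpos n).le
            _ = ε n := one_mul _
      have t1 : Tendsto (fun n => Real.log (⨆ i, ((⨅ j, y n j) / y n i) * x i)) atTop
          (𝓝 (Real.log (⨆ i, u i * x i))) :=
        ((Real.continuousAt_log p1.ne').tendsto).comp
          (mytendsto_ciSup (fun i => (ha_lim i).mul_const (x i)))
      have t2 : Tendsto (fun n => Real.log (⨆ i, (y n i / ⨆ j, y n j) / x i)) atTop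
          (𝓝 (Real.log (⨆ i, v i / x i))) :=
        ((Real.continuousAt_log p2.ne').tendsto).comp
          (mytendsto_ciSup (fun i => (hb_lim i).div_const (x i)))
      exact Tendsto.congr (fun n => (hilbert_diff hx (hy n)).symm) (t1.add t2)
    · rintro ⟨z, hz, hzeq⟩
      set t := Real.exp (-(hilbertDist (1 : Fin N → ℝ) z + 1)) with ht
      have htpos : 0 < t := Real.exp_pos _
      set x : Fin N → ℝ := fun i => if 0 < u i then t else 1 with hxdef
      have hx : ∀ i, 0 < x i := by
        intro i
        show (0:ℝ) < if 0 < u i then t else 1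
        split
        · exact htpos
        · norm_num
      have hxiu : x iu = t := by
        show (if 0 < u iu then t else 1) = t
        rw [if_pos (by rw [hiu]; norm_num)]
      have hxiv : x iv = 1 := by
        show (if 0 < u iv then t else 1) = 1
        rw [if_neg (by rw [huiv]; norm_num)]
      have hSu : (⨆ i, u i * x i) = t := by
        have hle : ∀ i, u i * x i ≤ u iu * x iu := by
          intro i
          rw [hxiu, hiu, one_mul]
          by_cases hui : 0 < u i
          · have hxi : x i = t := by
              show (if 0 < u i then t else 1) = t
              rw [if_pos hui]
            rw [hxi]
            nlinarith [hule i, htpos.le]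
          · have h0 : u i = 0 := le_antisymm (not_lt.mp hui) (hu i)
            rw [h0, zero_mul]
            exact htpos.le
        rw [myciSup_eq_of hle, hxiu, hiu, one_mul]
      have hSv : (⨆ i, v i / x i) = 1 := by
        have hle : ∀ i, v i / x i ≤ v iv / x iv := by
          intro i
          rw [hxiv, hiv, div_one]
          by_cases hui : 0 < u i
          · have hvi : v i = 0 := by
              rcases mul_eq_zero.mp (huv i) with h' | h'
              · exact absurd h' hui.ne'
              · exact h'
            rw [hvi, zero_div]
            norm_num
          · have hxi : x i = 1 := by
              show (if 0 < u i then t else 1) = 1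
              rw [if_neg hui]
            rw [hxi, div_one]
            exact hvle i
        rw [myciSup_eq_of hle, hxiv, hiv, div_one]
      have heq := hzeq x hx
      rw [hSu, hSv, Real.log_one, add_zero, ht, Real.log_exp] at heq
      have h0 := hilbert_nonneg hx hz
      linarith
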